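/- arXiv:1908.06736 — 3 statements merged into one kernel-verified Lean document; each statement's English description precedes it below -/
import Mathlib

section
/- Let z ∈ ℝⁿ have strictly positive entries and let f : ℝⁿ → ℝ be continuous on the positive orthant, positively homogeneous of degree t ∈ ℝ with t > -(n+1), and such that |f| is integrable on Δ_z = {x ∈ ℝⁿ₊ : zᵀx ≤ 1}. Then ∫_{Δ_z} f(x) dx = (1/Γ(1+n+t)) · ∫_{ℝⁿ₊} f(x) exp(-zᵀx) dx. -/
open MeasureTheory Finset

open Set Pointwise

-- boundary of orthant is null
lemma aux_null (n : ℕ) : ∀ᵐ x : Fin n → ℝ, ∀ i, x i ≠ 0 := by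
  have h : ∀ i : Fin n, (volume : Measure (Fin n → ℝ)) {x | x i = 0} = 0 := by
    intro i
    have : {x : Fin n → ℝ | x i = 0} = (LinearMap.ker (LinearMap.proj i : (Fin n → ℝ) →ₗ[ℝ] ℝ) : Set (Fin n → ℝ)) := by
      ext x; simp [LinearMap.mem_ker]
    rw [this]
    apply Measure.addHaar_submodule
    intro hker
    have h1 : (Function.update (0 : Fin n → ℝ) i 1) ∈ LinearMap.ker (LinearMap.proj i : (Fin n → ℝ) →ₗ[ℝ] ℝ) := by
      rw [hker]; trivial
    simp [LinearMap.mem_ker] at h1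
  rw [ae_iff]
  refine measure_mono_null (t := ⋃ i, {x : Fin n → ℝ | x i = 0}) ?_ ?_
  · intro x hx
    simp only [Set.mem_setOf_eq, not_forall, not_not] at hx
    obtain ⟨i, hi⟩ := hx
    exact Set.mem_iUnion.2 ⟨i, hi⟩
  · exact measure_iUnion_null h



lemma aux_smul_set (n : ℕ) (z : Fin n → ℝ) {r : ℝ} (hr : 0 < r) :
    {x : Fin n → ℝ | (∀ i, 0 ≤ x i) ∧ ∑ i, z i * x i ≤ r} =
      r • ({x : Fin n → ℝ | (∀ i, 0 ≤ x i) ∧ ∑ i, z i * x i ≤ 1} : Set (Fin n → ℝ)) := by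
  ext x
  rw [Set.mem_smul_set_iff_inv_smul_mem₀ hr.ne']
  simp only [Set.mem_setOf_eq, Pi.smul_apply, smul_eq_mul]
  have hsum : ∑ i, z i * (r⁻¹ * x i) = r⁻¹ * ∑ i, z i * x i := by
    rw [Finset.mul_sum]; exact Finset.sum_congr rfl fun i _ => by ring
  constructor
  · rintro ⟨h1, h2⟩
    refine ⟨fun i => mul_nonneg (inv_nonneg.2 hr.le) (h1 i), ?_⟩
    rw [hsum, inv_mul_le_iff₀ hr, mul_one]
    exact h2
  · rintro ⟨h1, h2⟩
    refine ⟨fun i => by have := mul_nonneg hr.le (h1 i); rwa [← mul_assoc, mul_inv_cancel₀ hr.ne', one_mul] at this, ?_⟩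
    rw [hsum, inv_mul_le_iff₀ hr, mul_one] at h2
    exact h2

lemma aux_meas (n : ℕ) (z : Fin n → ℝ) (r : ℝ) :
    MeasurableSet {x : Fin n → ℝ | (∀ i, 0 ≤ x i) ∧ ∑ i, z i * x i ≤ r} := by
  rw [Set.setOf_and]
  apply MeasurableSet.inter
  · have : {x : Fin n → ℝ | ∀ i, 0 ≤ x i} = Set.pi Set.univ (fun _ => Set.Ici (0:ℝ)) := by
      ext x; simp [Set.mem_univ_pi, Pi.le_def]
    rw [this]
    exact MeasurableSet.univ_pi fun i => measurableSet_Ici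
  · exact measurableSet_le (Finset.measurable_sum _ fun i _ =>
      (measurable_const.mul (measurable_pi_apply i))) measurable_const

lemma aux_orthant_meas (n : ℕ) : MeasurableSet {x : Fin n → ℝ | ∀ i, 0 ≤ x i} := by
  have : {x : Fin n → ℝ | ∀ i, 0 ≤ x i} = Set.pi Set.univ (fun _ => Set.Ici (0:ℝ)) := by
    ext x; simp [Set.mem_univ_pi, Pi.le_def]
  rw [this]
  exact MeasurableSet.univ_pi fun i => measurableSet_Ici

lemma aux_scale (n : ℕ) (t : ℝ) (z : Fin n → ℝ) (h : (Fin n → ℝ) → ℝ)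
    (hhom : ∀ (l : ℝ), 0 < l → ∀ x : Fin n → ℝ, (∀ i, 0 < x i) → h (l • x) = l ^ t * h x)
    {r : ℝ} (hr : 0 < r) :
    ∫ x in {x : Fin n → ℝ | (∀ i, 0 ≤ x i) ∧ ∑ i, z i * x i ≤ r}, h x =
      r ^ ((n : ℝ) + t) * ∫ x in {x : Fin n → ℝ | (∀ i, 0 ≤ x i) ∧ ∑ i, z i * x i ≤ 1}, h x := by
  set A := {x : Fin n → ℝ | (∀ i, 0 ≤ x i) ∧ ∑ i, z i * x i ≤ 1} with hA
  have hmeas : MeasurableSet A := aux_meas n z 1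
  have key := MeasureTheory.Measure.setIntegral_comp_smul_of_pos
    (volume : Measure (Fin n → ℝ)) h A hr
  rw [Module.finrank_fin_fun] at key
  have hcongr : ∫ x in A, h (r • x) = ∫ x in A, r ^ t * h x := by
    apply integral_congr_ae
    filter_upwards [ae_restrict_mem hmeas, ae_restrict_of_ae (aux_null n)] with x hx hx'
    exact hhom r hr x fun i => lt_of_le_of_ne (hx.1 i) (Ne.symm (hx' i))
  rw [hcongr, integral_const_mul, smul_eq_mul,
    eq_inv_mul_iff_mul_eq₀ (pow_ne_zero _ hr.ne')] at key
  rw [aux_smul_set n z hr, ← hA, ← key, Real.rpow_add hr, Real.rpow_natCast]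
  ring


lemma aux_intOn (n : ℕ) (t : ℝ) (z : Fin n → ℝ) (h : (Fin n → ℝ) → ℝ)
    (hhom : ∀ (l : ℝ), 0 < l → ∀ x : Fin n → ℝ, (∀ i, 0 < x i) → h (l • x) = l ^ t * h x)
    {r : ℝ} (hr : 0 < r)
    (hint : IntegrableOn h {x : Fin n → ℝ | (∀ i, 0 ≤ x i) ∧ ∑ i, z i * x i ≤ 1}) :
    IntegrableOn h {x : Fin n → ℝ | (∀ i, 0 ≤ x i) ∧ ∑ i, z i * x i ≤ r} := by
  set A := {x : Fin n → ℝ | (∀ i, 0 ≤ x i) ∧ ∑ i, z i * x i ≤ 1} with hA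
  set B := {x : Fin n → ℝ | (∀ i, 0 ≤ x i) ∧ ∑ i, z i * x i ≤ r} with hB
  have hmA : MeasurableSet A := aux_meas n z 1
  have hmB : MeasurableSet B := aux_meas n z r
  refine (integrable_indicator_iff hmB).mp ?_
  have hcomp : (fun x => B.indicator h (r • x)) = A.indicator (fun x => h (r • x)) := by
    ext x
    have hmem : (r • x ∈ B) ↔ (x ∈ A) := by
      rw [hB, aux_smul_set n z hr, ← hA]
      exact Set.smul_mem_smul_set_iff₀ hr.ne' _ _
    simp only [Set.indicator_apply, hmem]
  have h2 : Integrable (fun x => B.indicator h (r • x)) := by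
    rw [hcomp]
    have hae : A.indicator (fun x => h (r • x)) =ᵐ[volume] fun x => r ^ t • A.indicator h x := by
      filter_upwards [aux_null n] with x hx
      by_cases hxA : x ∈ A
      · rw [Set.indicator_of_mem hxA, Set.indicator_of_mem hxA, smul_eq_mul]
        exact hhom r hr x fun i => lt_of_le_of_ne (hxA.1 i) (Ne.symm (hx i))
      · rw [Set.indicator_of_notMem hxA, Set.indicator_of_notMem hxA, smul_zero]
    exact (Integrable.smul (r ^ t) ((integrable_indicator_iff hmA).mpr hint)).congr hae.symm
  exact (integrable_comp_smul_iff volume (B.indicator h) hr.ne').mp h2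


theorem integral_simplex_eq_integral_orthant_exp (n : ℕ) (t : ℝ) (z : Fin n → ℝ)
    (f : (Fin n → ℝ) → ℝ)
    (hz : ∀ i, 0 < z i)
    (hf_cont : ContinuousOn f {x : Fin n → ℝ | ∀ i, 0 ≤ x i})
    (hf_homog : ∀ (l : ℝ), 0 < l → ∀ x : Fin n → ℝ, (∀ i, 0 < x i) →
      f (l • x) = l ^ t * f x)
    (ht : -(n + 1 : ℝ) < t)
    (hf_int : IntegrableOn (fun x => |f x|)
      {x : Fin n → ℝ | (∀ i, 0 ≤ x i) ∧ ∑ i, z i * x i ≤ 1}) :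
    ∫ x in {x : Fin n → ℝ | (∀ i, 0 ≤ x i) ∧ ∑ i, z i * x i ≤ 1}, f x =
      (1 / Real.Gamma (1 + n + t)) *
        ∫ x in {x : Fin n → ℝ | ∀ i, 0 ≤ x i}, f x * Real.exp (-∑ i, z i * x i) := by
  classical
  have h0 : (0:ℝ) < (n:ℝ) + t + 1 := by linarith
  set S := {x : Fin n → ℝ | ∀ i, 0 ≤ x i} with hS_def
  have hS : MeasurableSet S := aux_orthant_meas n
  set L : (Fin n → ℝ) → ℝ := fun x => ∑ i, z i * x i with hL_def
  have hL_cont : Continuous L :=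
    continuous_finset_sum _ fun i _ => continuous_const.mul (continuous_apply i)
  -- the continuous extension g of f
  set g : (Fin n → ℝ) → ℝ := fun x => f (fun i => max (x i) 0) with hg_def
  have hg_cont : Continuous g := by
    apply hf_cont.comp_continuous
    · exact continuous_pi fun i => (continuous_apply i).max continuous_const
    · exact fun x i => le_max_right _ _
  have hg_eq : ∀ x ∈ S, g x = f x := by
    intro x hx
    have hpx : (fun i => max (x i) 0) = x := funext fun i => max_eq_left (hx i)
    rw [hg_def]; simp only [hpx]
  have hg_hom : ∀ (l : ℝ), 0 < l → ∀ x : Fin n → ℝ, (∀ i, 0 < x i) →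
      g (l • x) = l ^ t * g x := by
    intro l hl x hx
    have h1 : (fun i => max ((l • x) i) 0) = l • x :=
      funext fun i => max_eq_left (mul_nonneg hl.le (hx i).le)
    have h2 : (fun i => max (x i) 0) = x := funext fun i => max_eq_left (hx i).le
    rw [hg_def]; simp only [h1, h2]
    exact hf_homog l hl x hx
  have habs_hom : ∀ (l : ℝ), 0 < l → ∀ x : Fin n → ℝ, (∀ i, 0 < x i) →
      |g (l • x)| = l ^ t * |g x| := by
    intro l hl x hx
    rw [hg_hom l hl x hx, abs_mul, abs_of_pos (Real.rpow_pos_of_pos hl t)]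
  -- integrability on the unit simplex
  have habs_int : IntegrableOn (fun x => |g x|)
      {x : Fin n → ℝ | (∀ i, 0 ≤ x i) ∧ ∑ i, z i * x i ≤ 1} := by
    apply hf_int.congr_fun _ (aux_meas n z 1)
    intro x hx
    show |f x| = |g x|
    rw [hg_eq x hx.1]
  have hint_g1 : IntegrableOn g {x : Fin n → ℝ | (∀ i, 0 ≤ x i) ∧ ∑ i, z i * x i ≤ 1} := by
    apply Integrable.mono' habs_int hg_cont.aestronglyMeasurable.restrict
    filter_upwards with x
    simp [Real.norm_eq_abs, le_refl]
  set I := ∫ x in {x : Fin n → ℝ | (∀ i, 0 ≤ x i) ∧ ∑ i, z i * x i ≤ 1}, g x with hI_def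
  set C := ∫ x in {x : Fin n → ℝ | (∀ i, 0 ≤ x i) ∧ ∑ i, z i * x i ≤ 1}, |g x| with hC_def
  -- the product function
  set F : (Fin n → ℝ) × ℝ → ℝ :=
    Set.indicator {q : (Fin n → ℝ) × ℝ | L q.1 ≤ q.2} (fun q => Real.exp (-q.2) * g q.1)
    with hF_def
  have hmeasA : MeasurableSet {q : (Fin n → ℝ) × ℝ | L q.1 ≤ q.2} :=
    measurableSet_le (hL_cont.comp continuous_fst).measurable measurable_snd
  have hF_meas : StronglyMeasurable F :=
    (Continuous.stronglyMeasurable (by fun_prop)).indicator hmeasA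
  have hmeasLe : ∀ s : ℝ, MeasurableSet {x : Fin n → ℝ | L x ≤ s} := fun s =>
    measurableSet_le hL_cont.measurable measurable_const
  have hF_x : ∀ (s : ℝ) (x : Fin n → ℝ),
      F (x, s) = ({x : Fin n → ℝ | L x ≤ s}).indicator (fun x => Real.exp (-s) * g x) x := by
    intro s x
    simp [hF_def, Set.indicator_apply]
  have hsets : ∀ s : ℝ, {x : Fin n → ℝ | L x ≤ s} ∩ S =
      {x : Fin n → ℝ | (∀ i, 0 ≤ x i) ∧ ∑ i, z i * x i ≤ s} := by
    intro s; ext x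
    simp only [hS_def, hL_def, Set.mem_inter_iff, Set.mem_setOf_eq]
    tauto
  -- integrable slices
  have hslice : ∀ s : ℝ, 0 < s → Integrable (fun x => F (x, s)) (volume.restrict S) := by
    intro s hs
    rw [show (fun x => F (x, s)) =
      ({x : Fin n → ℝ | L x ≤ s}).indicator (fun x => Real.exp (-s) * g x) from funext (hF_x s)]
    rw [integrable_indicator_iff (hmeasLe s), IntegrableOn,
      Measure.restrict_restrict (hmeasLe s), hsets s]
    exact (aux_intOn n t z g hg_hom hs hint_g1).const_mul _
  -- value of norm integrals
  have hnorm : ∀ s : ℝ, 0 < s →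
      ∫ x, ‖F (x, s)‖ ∂(volume.restrict S) = Real.exp (-s) * (s ^ ((n:ℝ) + t) * C) := by
    intro s hs
    have h1 : (fun x => ‖F (x, s)‖) =
        ({x : Fin n → ℝ | L x ≤ s}).indicator (fun x => Real.exp (-s) * |g x|) := by
      funext x
      rw [hF_x s x]
      simp only [Set.indicator_apply]
      split_ifs with hmem
      · rw [Real.norm_eq_abs, abs_mul, abs_of_pos (Real.exp_pos _)]
      · simp
    rw [h1, setIntegral_indicator (hmeasLe s), Set.inter_comm, hsets s, integral_const_mul,
      aux_scale n t z (fun x => |g x|) habs_hom hs, ← hC_def]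
  -- integrability on the product
  have hFint : Integrable F ((volume.restrict S).prod (volume.restrict (Ioi 0))) := by
    rw [integrable_prod_iff' hF_meas.aestronglyMeasurable]
    constructor
    · filter_upwards [ae_restrict_mem measurableSet_Ioi] with s hs
      exact hslice s hs
    · have hexp : (n:ℝ) + t + 1 - 1 = (n:ℝ) + t := by ring
      have hG : Integrable (fun s => Real.exp (-s) * (s ^ ((n:ℝ) + t) * C))
          (volume.restrict (Ioi 0)) := by
        have := (Real.GammaIntegral_convergent h0).const_mul C
        apply this.congr
        filter_upwards with s
        rw [hexp]; ring
      apply hG.congr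
      filter_upwards [ae_restrict_mem measurableSet_Ioi] with s hs
      exact (hnorm s hs).symm
  -- Fubini
  have hswap : ∫ x in S, (∫ s in Ioi 0, F (x, s)) = ∫ s in Ioi 0, (∫ x in S, F (x, s)) :=
    integral_integral_swap hFint
  -- left side is the exponential integral
  have hLHS : ∫ x in S, (∫ s in Ioi 0, F (x, s)) = ∫ x in S, g x * Real.exp (-L x) := by
    apply integral_congr_ae
    filter_upwards [ae_restrict_mem hS] with x hx
    have hLx : 0 ≤ L x := Finset.sum_nonneg fun i _ => mul_nonneg (hz i).le (hx i)
    have h1 : (fun s => F (x, s)) = (Set.Ici (L x)).indicator (fun s => Real.exp (-s) * g x) := by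
      funext s
      rw [hF_x s x]
      simp [Set.indicator_apply, Set.mem_Ici]
    rw [h1, setIntegral_indicator measurableSet_Ici]
    have hseteq : ((Set.Ioi (0:ℝ) ∩ Set.Ici (L x) : Set ℝ)) =ᵐ[volume] (Set.Ioi (L x) : Set ℝ) := by
      rcases eq_or_lt_of_le hLx with h | h
      · rw [← h, Set.inter_eq_left.mpr Set.Ioi_subset_Ici_self]
        exact Filter.EventuallyEq.rfl
      · rw [Set.inter_eq_right.mpr (show Set.Ici (L x) ⊆ Set.Ioi (0:ℝ) from fun s hs => lt_of_lt_of_le h hs)]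
        exact (MeasureTheory.Ioi_ae_eq_Ici (μ := volume)).symm
    rw [setIntegral_congr_set hseteq, integral_mul_const, integral_exp_neg_Ioi]
    ring
  -- right side is the Gamma integral
  have hRHS : ∫ s in Ioi 0, (∫ x in S, F (x, s)) =
      (∫ s in Ioi 0, Real.exp (-s) * s ^ ((n:ℝ) + t)) * I := by
    rw [← integral_mul_const]
    apply integral_congr_ae
    filter_upwards [ae_restrict_mem measurableSet_Ioi] with s hs
    rw [show (fun x => F (x, s)) =
      ({x : Fin n → ℝ | L x ≤ s}).indicator (fun x => Real.exp (-s) * g x) from funext (hF_x s)]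
    rw [setIntegral_indicator (hmeasLe s), Set.inter_comm, hsets s, integral_const_mul,
      aux_scale n t z g hg_hom hs, ← hI_def]
    ring
  have hgamma : ∫ s in Ioi 0, Real.exp (-s) * s ^ ((n:ℝ) + t) = Real.Gamma ((n:ℝ) + t + 1) := by
    rw [Real.Gamma_eq_integral h0]
    apply setIntegral_congr_fun measurableSet_Ioi
    intro s hs
    rw [show (n:ℝ) + t + 1 - 1 = (n:ℝ) + t by ring]
  -- assemble
  have hmain : ∫ x in S, g x * Real.exp (-L x) = Real.Gamma ((n:ℝ) + t + 1) * I := by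
    rw [← hLHS, hswap, hRHS, hgamma]
  have hfg1 : ∫ x in {x : Fin n → ℝ | (∀ i, 0 ≤ x i) ∧ ∑ i, z i * x i ≤ 1}, f x = I := by
    rw [hI_def]
    apply setIntegral_congr_fun (aux_meas n z 1)
    intro x hx
    exact (hg_eq x hx.1).symm
  have hfg2 : ∫ x in S, f x * Real.exp (-∑ i, z i * x i) =
      ∫ x in S, g x * Real.exp (-L x) := by
    apply setIntegral_congr_fun hS
    intro x hx
    show f x * Real.exp (-∑ i, z i * x i) = g x * Real.exp (-L x)
    rw [hg_eq x hx]
  rw [hfg1, hfg2, hmain, show (1:ℝ) + n + t = (n:ℝ) + t + 1 by ring]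
  have hΓ : Real.Gamma ((n:ℝ) + t + 1) ≠ 0 := (Real.Gamma_pos_of_pos h0).ne'
  field_simp
end

section
/- Let f be a homogeneous polynomial of degree t in n variables, f(x) = Σ_{|α|=t} f_α x^α, and let z ∈ ℝⁿ have strictly positive entries. Then ∫_{Δ_z} f(x) dx = (1/(n+t)!) · f̂(1/z) / (z₁⋯zₙ), where Δ_z = {x ∈ ℝⁿ₊ : zᵀx ≤ 1}, 1/z = (1/z₁,…,1/zₙ), and f̂(x) = Σ_{|α|=t} α₁!⋯αₙ! f_α x^α. -/
open MeasureTheory Finset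
open intervalIntegral

lemma beta1 (m : ℕ) : ∀ a : ℕ,
    ∫ x in (0:ℝ)..1, x ^ a * (1 - x) ^ m
      = (a.factorial : ℝ) * m.factorial / (a + m + 1).factorial := by
  induction m with
  | zero =>
    intro a
    simp only [pow_zero, mul_one, integral_pow, one_pow, Nat.factorial]
    rw [zero_pow (by omega)]
    have hne : (a.factorial : ℝ) ≠ 0 := by exact_mod_cast Nat.factorial_ne_zero _
    push_cast
    field_simp
    norm_num
  | succ m IH =>
    intro a
    have hu : ∀ x ∈ Set.uIcc (0:ℝ) 1, HasDerivAt (fun x : ℝ => (1 - x) ^ (m + 1))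
        (-((m+1 : ℝ) * (1 - x) ^ m)) x := by
      intro x _
      have h1 : HasDerivAt (fun x : ℝ => 1 - x) (-1) x := (hasDerivAt_id x).const_sub 1
      have := h1.pow (m + 1)
      convert this using 1
      push_cast
      · rfl
      · rfl
      · rfl
      · simp only [Nat.add_sub_cancel]; push_cast; ring
    have hv : ∀ x ∈ Set.uIcc (0:ℝ) 1, HasDerivAt (fun x : ℝ => x ^ (a+1) / (a+1))
        (x ^ a) x := by
      intro x _
      have := (hasDerivAt_pow (a+1) x).div_const ((a:ℝ)+1)
      convert this using 1
      have : ((a:ℝ) + 1) ≠ 0 := by positivity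
      · rfl
      · rfl
      · simp only [Nat.add_sub_cancel]; push_cast; field_simp
    have key := integral_mul_deriv_eq_deriv_mul hu hv
      (Continuous.intervalIntegrable (by continuity) 0 1)
      (Continuous.intervalIntegrable (by continuity) 0 1)
    have h2 : ∀ x : ℝ, x ^ a * (1-x)^(m+1) = (1-x)^(m+1) * x ^ a := fun x => mul_comm _ _
    simp only [h2]
    rw [key]
    simp only [one_pow, sub_self, zero_pow (Nat.succ_ne_zero m), zero_mul, zero_div, mul_zero,
      zero_pow (Nat.succ_ne_zero a), sub_zero, zero_sub]
    have h3 : ∀ x : ℝ, -((m+1 : ℝ) * (1 - x) ^ m) * (x ^ (a+1) / (a+1))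
        = (-((m+1:ℝ)/(a+1))) * (x ^ (a+1) * (1-x)^m) := by
      intro x; field_simp
    simp only [h3]
    rw [intervalIntegral.integral_const_mul, IH (a+1)]
    have ha : ((a:ℝ) + 1) ≠ 0 := by positivity
    have e1 : (a + 1 + m + 1) = (a + (m+1) + 1) := by omega
    rw [e1]
    have hfa : ((a+1).factorial : ℝ) = (a+1) * a.factorial := by
      rw [Nat.factorial_succ]; push_cast; ring
    have hfm : ((m+1).factorial : ℝ) = (m+1) * m.factorial := by
      rw [Nat.factorial_succ]; push_cast; ring
    rw [hfa, hfm]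
    have hne : ((a + (m+1) + 1).factorial : ℝ) ≠ 0 := by
      exact_mod_cast Nat.factorial_ne_zero _
    push_cast
    field_simp

lemma beta_c (a m : ℕ) {c : ℝ} (hc : 0 ≤ c) :
    ∫ x in (0:ℝ)..c, x ^ a * (c - x) ^ m
      = (a.factorial : ℝ) * m.factorial / (a + m + 1).factorial * c ^ (a + m + 1) := by
  rcases eq_or_lt_of_le hc with h | h
  · rw [← h]
    simp [zero_pow (show a+m+1 ≠ 0 by omega)]
  · have hc0 : c ≠ 0 := ne_of_gt h
    have := intervalIntegral.integral_comp_mul_left (a := (0:ℝ)) (b := 1)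
      (fun x => x ^ a * (c - x) ^ m) hc0
    simp only [mul_zero, mul_one] at this
    have h2 : ∀ x : ℝ, (c * x) ^ a * (c - c * x) ^ m = c ^ (a + m) * (x ^ a * (1 - x) ^ m) := by
      intro x
      rw [mul_pow, show c - c*x = c * (1-x) by ring, mul_pow, pow_add]
      ring
    simp only [h2] at this
    rw [intervalIntegral.integral_const_mul, beta1] at this
    have : (∫ x in (0:ℝ)..c, x ^ a * (c - x) ^ m)
        = c * (c ^ (a+m) * ((a.factorial : ℝ) * m.factorial / (a + m + 1).factorial)) := by
      rw [this, smul_eq_mul, ← mul_assoc, mul_inv_cancel₀ hc0, one_mul]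
    rw [this, pow_succ]
    ring

lemma beta_z (a m : ℕ) {z c : ℝ} (hz : 0 < z) (hc : 0 ≤ c) :
    ∫ x in (0:ℝ)..(c / z), x ^ a * (c - z * x) ^ m
      = (a.factorial : ℝ) * m.factorial / (a + m + 1).factorial * z⁻¹ ^ (a + 1) * c ^ (a + m + 1) := by
  have hz0 : z ≠ 0 := ne_of_gt hz
  have := intervalIntegral.integral_comp_mul_left (a := (0:ℝ)) (b := c / z)
    (fun u => (u / z) ^ a * (c - u) ^ m) hz0
  simp only [mul_zero, mul_div_cancel₀ _ hz0] at this
  have h2 : ∀ x : ℝ, (z * x / z) ^ a * (c - z * x) ^ m = x ^ a * (c - z * x) ^ m := by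
    intro x; rw [mul_div_cancel_left₀ _ hz0]
  simp only [h2] at this
  rw [this]
  have h3 : ∀ u : ℝ, (u / z) ^ a * (c - u) ^ m = z⁻¹ ^ a * (u ^ a * (c - u) ^ m) := by
    intro u; rw [div_pow, div_eq_mul_inv, inv_pow]; ring
  simp only [h3]
  rw [intervalIntegral.integral_const_mul, beta_c a m hc]
  rw [smul_eq_mul, pow_succ]
  ring

lemma simplex_decomp (n : ℕ) (z : Fin n → ℝ) (c : ℝ) :
    {x : Fin n → ℝ | (∀ i, 0 ≤ x i) ∧ ∑ i, z i * x i ≤ c}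
      = (⋂ i, {x | 0 ≤ x i}) ∩ {x | ∑ i, z i * x i ≤ c} := by
  ext x; simp [Set.mem_iInter]

lemma simplex_meas (n : ℕ) (z : Fin n → ℝ) (c : ℝ) :
    MeasurableSet {x : Fin n → ℝ | (∀ i, 0 ≤ x i) ∧ ∑ i, z i * x i ≤ c} := by
  rw [simplex_decomp]
  exact (MeasurableSet.iInter fun i =>
      measurableSet_le measurable_const (measurable_pi_apply i)).inter
    (measurableSet_le (by measurability) measurable_const)

lemma simplex_compact (n : ℕ) (z : Fin n → ℝ) (hz : ∀ i, 0 < z i) (c : ℝ) :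
    IsCompact {x : Fin n → ℝ | (∀ i, 0 ≤ x i) ∧ ∑ i, z i * x i ≤ c} := by
  have hclosed : IsClosed {x : Fin n → ℝ | (∀ i, 0 ≤ x i) ∧ ∑ i, z i * x i ≤ c} := by
    rw [simplex_decomp]
    exact (isClosed_iInter fun i =>
        isClosed_le continuous_const (continuous_apply i)).inter
      (isClosed_le (continuous_finset_sum Finset.univ
        (fun i _ => continuous_const.mul (continuous_apply i))) continuous_const)
  refine IsCompact.of_isClosed_subset (isCompact_Icc
    (a := (0 : Fin n → ℝ)) (b := fun i => c / z i)) hclosed ?_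
  rintro x ⟨h1, h2⟩
  rw [Set.mem_Icc]
  refine ⟨fun i => h1 i, fun i => ?_⟩
  rw [le_div_iff₀ (hz i)]
  have : z i * x i ≤ ∑ j, z j * x j :=
    Finset.single_le_sum (f := fun j => z j * x j)
      (fun j _ => mul_nonneg (hz j).le (h1 j)) (Finset.mem_univ i)
  linarith

lemma simplex_integrableOn (n : ℕ) (z : Fin n → ℝ) (hz : ∀ i, 0 < z i) (c : ℝ)
    {f : (Fin n → ℝ) → ℝ} (hf : Continuous f) :
    IntegrableOn f {x : Fin n → ℝ | (∀ i, 0 ≤ x i) ∧ ∑ i, z i * x i ≤ c} := by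
  exact hf.continuousOn.integrableOn_compact (simplex_compact n z hz c)
lemma key : ∀ (n : ℕ) (z : Fin n → ℝ), (∀ i, 0 < z i) → ∀ (α : Fin n → ℕ) (m : ℕ) (c : ℝ),
    0 ≤ c →
    (∫ x in {x : Fin n → ℝ | (∀ i, 0 ≤ x i) ∧ ∑ i, z i * x i ≤ c},
      (∏ i, x i ^ α i) * (c - ∑ i, z i * x i) ^ m)
    = (∏ i, ((α i).factorial : ℝ) * (z i)⁻¹ ^ (α i + 1)) * m.factorial
        / ((n + m + ∑ i, α i).factorial) * c ^ (n + m + ∑ i, α i) := by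
  intro n
  induction n with
  | zero =>
    intro z hz α m c hc
    have hset : {x : Fin 0 → ℝ | (∀ i, 0 ≤ x i) ∧ ∑ i, z i * x i ≤ c} = Set.univ := by
      ext x
      simp [hc]
    rw [hset]
    simp only [Finset.univ_eq_empty, Finset.prod_empty, Finset.sum_empty, sub_zero, one_mul,
      zero_add]
    rw [setIntegral_univ, MeasureTheory.integral_const]
    rw [volume_pi, measureReal_def, Measure.pi_univ]
    simp only [Finset.univ_eq_empty, Finset.prod_empty, ENNReal.toReal_one, one_smul, smul_eq_mul,
      one_mul]
    have : ((m.factorial : ℝ)) ≠ 0 := by exact_mod_cast Nat.factorial_ne_zero m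
    field_simp
    rw [Nat.add_zero]; ring
  | succ n IH =>
    intro z hz α m c hc
    set S := {x : Fin (n+1) → ℝ | (∀ i, 0 ≤ x i) ∧ ∑ i, z i * x i ≤ c} with hSdef
    set f : (Fin (n+1) → ℝ) → ℝ :=
      fun x => (∏ i, x i ^ α i) * (c - ∑ i, z i * x i) ^ m with hfdef
    set z' : Fin n → ℝ := fun i => z i.succ with hz'def
    set α' : Fin n → ℕ := fun i => α i.succ with hα'def
    have hz' : ∀ i, 0 < z' i := fun i => hz _
    have hz0 : 0 < z 0 := hz 0
    set M := n + m + ∑ i, α' i with hMdef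
    set K := (∏ i, ((α' i).factorial : ℝ) * (z' i)⁻¹ ^ (α' i + 1)) * m.factorial
        / (M.factorial : ℝ) with hKdef
    have hS : MeasurableSet S := simplex_meas (n+1) z c
    have hfc : Continuous f := by
      exact ((continuous_finset_prod _ fun i _ => (continuous_apply i).pow _).mul
        ((continuous_const.sub (continuous_finset_sum _
          fun i _ => continuous_const.mul (continuous_apply i))).pow _))
    have hInt1 : Integrable (Set.indicator S f)
        (Measure.pi fun _ : Fin (n+1) => (volume : Measure ℝ)) := by
      rw [← volume_pi, integrable_indicator_iff hS]
      exact simplex_integrableOn _ z hz c hfc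
    rw [← MeasureTheory.integral_indicator hS]
    have hMP := (measurePreserving_piFinSuccAbove
      (fun _ : Fin (n+1) => (volume : Measure ℝ)) 0).symm
    rw [volume_pi, ← hMP.integral_comp']
    have hInt2 : Integrable
        ((Set.indicator S f) ∘ (MeasurableEquiv.piFinSuccAbove (fun _ : Fin (n+1) => ℝ) 0).symm)
        ((volume : Measure ℝ).prod (Measure.pi fun _ : Fin n => (volume : Measure ℝ))) := by
      exact (hMP.integrable_comp_emb (MeasurableEquiv.measurableEmbedding _)).mpr hInt1
    rw [show (fun x => Set.indicator S f
          ((MeasurableEquiv.piFinSuccAbove (fun _ : Fin (n+1) => ℝ) 0).symm x))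
        = ((Set.indicator S f) ∘ (MeasurableEquiv.piFinSuccAbove (fun _ : Fin (n+1) => ℝ) 0).symm)
        from rfl]
    rw [MeasureTheory.integral_prod _ hInt2]
    simp only [Function.comp_def, MeasurableEquiv.piFinSuccAbove_symm_apply, Fin.insertNthEquiv,
      Equiv.coe_fn_mk, Fin.insertNth_zero, Fin.zero_succAbove, cast_eq]
    have hinner : ∀ x0 : ℝ, (∫ y : Fin n → ℝ, Set.indicator S f (Fin.cons x0 y)
          ∂(Measure.pi fun _ : Fin n => (volume : Measure ℝ)))
        = Set.indicator (Set.Icc 0 (c / z 0))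
            (fun t => t ^ (α 0) * (K * (c - z 0 * t) ^ M)) x0 := by
      intro x0
      rw [← volume_pi]
      by_cases h : 0 ≤ x0 ∧ z 0 * x0 ≤ c
      · have hc' : (0:ℝ) ≤ c - z 0 * x0 := by linarith [h.2]
        have hmem : x0 ∈ Set.Icc 0 (c / z 0) :=
          ⟨h.1, (le_div_iff₀ hz0).mpr (by linarith [h.2])⟩
        rw [Set.indicator_of_mem hmem]
        have hpt : ∀ y : Fin n → ℝ, Set.indicator S f (Fin.cons x0 y)
            = x0 ^ (α 0) * Set.indicator
                {y : Fin n → ℝ | (∀ i, 0 ≤ y i) ∧ ∑ i, z' i * y i ≤ c - z 0 * x0}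
                (fun y => (∏ i, y i ^ α' i) * ((c - z 0 * x0) - ∑ i, z' i * y i) ^ m) y := by
          intro y
          by_cases hy : y ∈ {y : Fin n → ℝ | (∀ i, 0 ≤ y i) ∧ ∑ i, z' i * y i ≤ c - z 0 * x0}
          · have hmem2 : Fin.cons x0 y ∈ S := by
              constructor
              · intro i
                refine Fin.cases ?_ ?_ i
                · simpa using h.1
                · intro j; simpa using hy.1 j
              · rw [Fin.sum_univ_succ]
                simp only [Fin.cons_zero, Fin.cons_succ]
                have := hy.2
                rw [hz'def] at this
                simp only at this
                linarith
            rw [Set.indicator_of_mem hmem2, Set.indicator_of_mem hy]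
            simp only [hfdef]
            rw [Fin.prod_univ_succ, Fin.sum_univ_succ]
            simp only [Fin.cons_zero, Fin.cons_succ, hz'def, hα'def]
            ring
          · have hmem2 : Fin.cons x0 y ∉ S := by
              intro hmem2
              obtain ⟨h1, h2⟩ := hmem2
              apply hy
              constructor
              · intro i; simpa using h1 i.succ
              · rw [Fin.sum_univ_succ] at h2
                simp only [Fin.cons_zero, Fin.cons_succ] at h2
                simp only [hz'def]
                linarith
            rw [Set.indicator_of_notMem hmem2, Set.indicator_of_notMem hy, mul_zero]
        simp_rw [hpt]
        rw [MeasureTheory.integral_const_mul]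
        rw [MeasureTheory.integral_indicator (simplex_meas n z' _)]
        rw [IH z' hz' α' m _ hc']
      · have hzero : ∀ y : Fin n → ℝ, Set.indicator S f (Fin.cons x0 y) = 0 := by
          intro y
          apply Set.indicator_of_notMem
          intro hmem
          obtain ⟨h1, h2⟩ := hmem
          apply h
          refine ⟨by simpa using h1 0, ?_⟩
          rw [Fin.sum_univ_succ] at h2
          simp only [Fin.cons_zero, Fin.cons_succ] at h2
          have hnn : ∀ j : Fin n, 0 ≤ z j.succ * y j :=
            fun j => mul_nonneg (hz _).le (by simpa using h1 j.succ)
          have := Finset.sum_nonneg (fun j (_ : j ∈ Finset.univ) => hnn j)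
          linarith
        simp_rw [hzero, MeasureTheory.integral_zero]
        rw [Set.indicator_of_notMem]
        intro hmem
        exact h ⟨hmem.1, by
          have := hmem.2
          rw [le_div_iff₀ hz0] at this
          linarith⟩
    rw [MeasureTheory.integral_congr_ae (Filter.Eventually.of_forall hinner)]
    rw [MeasureTheory.integral_indicator measurableSet_Icc, MeasureTheory.integral_Icc_eq_integral_Ioc,
      ← intervalIntegral.integral_of_le (div_nonneg hc hz0.le)]
    simp_rw [show ∀ t:ℝ, t ^ α 0 * (K * (c - z 0 * t)^M) = K * (t ^ α 0 * (c - z 0 * t)^M)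
      from fun t => by ring]
    rw [intervalIntegral.integral_const_mul, beta_z (α 0) M hz0 hc]
    have hexp : n + 1 + m + ∑ i, α i = α 0 + M + 1 := by
      rw [Fin.sum_univ_succ, hMdef]
      simp only [hα'def]
      omega
    rw [hexp, Fin.prod_univ_succ, hKdef]
    have hM0 : ((M.factorial : ℝ)) ≠ 0 := by exact_mod_cast Nat.factorial_ne_zero M
    have hM1 : (((α 0 + M + 1).factorial : ℝ)) ≠ 0 := by exact_mod_cast Nat.factorial_ne_zero _
    simp only [hα'def, hz'def]
    generalize (∏ i : Fin n, ((α i.succ).factorial:ℝ) * (z i.succ)⁻¹ ^ (α i.succ + 1)) = P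
    field_simp

/-- The Bombieri polynomial of `p`, evaluated at `x`: each coefficient `p_α` is
multiplied by `α₁! ⋯ αₙ!`. -/
noncomputable def bombieriEval {n : ℕ} (p : MvPolynomial (Fin n) ℝ) (x : Fin n → ℝ) : ℝ :=
  ∑ α ∈ p.support, (∏ i, (Nat.factorial (α i) : ℝ)) * p.coeff α * ∏ i, x i ^ α i

theorem integral_homog_poly_simplex_z (n t : ℕ) (p : MvPolynomial (Fin n) ℝ)
    (hp : p.IsHomogeneous t) (z : Fin n → ℝ) (hz : ∀ i, 0 < z i) :
    ∫ x in {x : Fin n → ℝ | (∀ i, 0 ≤ x i) ∧ ∑ i, z i * x i ≤ 1},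
        MvPolynomial.eval x p =
      (1 / (Nat.factorial (n + t) : ℝ)) * bombieriEval p (fun i => (z i)⁻¹) *
        (∏ i, z i)⁻¹ := by
  have heval : ∀ x : Fin n → ℝ, MvPolynomial.eval x p
      = ∑ α ∈ p.support, p.coeff α * ∏ i, x i ^ α i :=
    fun x => MvPolynomial.eval_eq' x p
  simp only [heval]
  rw [integral_finset_sum p.support (fun α _ => by
    refine (simplex_integrableOn n z hz 1 ?_)
    exact continuous_const.mul (continuous_finset_prod _
      fun i _ => (continuous_apply i).pow _))]
  rw [bombieriEval, Finset.mul_sum, Finset.sum_mul]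
  refine Finset.sum_congr rfl (fun α hα => ?_)
  have hdeg : ∑ i, α i = t := by
    have h1 := hp (MvPolynomial.mem_support_iff.mp hα)
    rw [show (Finsupp.weight 1 : (Fin n →₀ ℕ) →+ ℕ) = Finsupp.weight (fun _ => 1) from rfl, ← Finsupp.degree_eq_weight_one] at h1
    rw [← h1, Finsupp.degree]
    exact (Finset.sum_subset (Finset.subset_univ _)
      (fun i _ hi => Finsupp.notMem_support_iff.mp hi)).symm
  rw [MeasureTheory.integral_const_mul]
  have hk := key n z hz (fun i => α i) 0 1 zero_le_one
  simp only [pow_zero, mul_one, Nat.factorial_zero, Nat.cast_one, one_pow, Nat.add_zero] at hk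
  rw [hk, hdeg]
  have hprod : (∏ i, ((α i).factorial : ℝ) * (z i)⁻¹ ^ (α i + 1))
      = (∏ i, ((α i).factorial : ℝ)) * (∏ i, (z i)⁻¹ ^ (α i)) * (∏ i, z i)⁻¹ := by
    rw [← Finset.prod_inv_distrib, ← Finset.prod_mul_distrib, ← Finset.prod_mul_distrib]
    exact Finset.prod_congr rfl fun i _ => by rw [pow_succ]; ring
  rw [hprod]
  ring
end

section
/- Let f be a polynomial of total degree t in n variables, written f = Σ_{j=0}^t f_j with each f_j homogeneous of degree j. Then ∫_Δ f(x) dx = (1/n!) · (f̂₀ + Σ_{j=1}^t f̂_j(ξ_j)), where ξ_j = e/((n+1)⋯(n+j))^{1/j} and f̂_j is the Bombieri polynomial of f_j. -/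
open MeasureTheory Finset intervalIntegral

lemma fact_prod_range (a k : ℕ) :
    (Nat.factorial a) * ∏ j ∈ Finset.range k, (a + 1 + j) = Nat.factorial (a + k) := by
  induction k with
  | zero => simp
  | succ m ih =>
    rw [Finset.prod_range_succ, ← mul_assoc, ih, ← Nat.add_assoc, Nat.factorial_succ]
    ring

lemma beta_nat (a b : ℕ) :
    ∫ x in (0:ℝ)..1, x ^ a * (1 - x) ^ b
      = (Nat.factorial a : ℝ) * (Nat.factorial b) / (Nat.factorial (a + b + 1)) := by
  have h1 : Complex.betaIntegral (a + 1) (b + 1)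
      = ((∫ x in (0:ℝ)..1, x ^ a * (1 - x) ^ b : ℝ) : ℂ) := by
    rw [Complex.betaIntegral]
    rw [← intervalIntegral.integral_ofReal]
    refine intervalIntegral.integral_congr fun x hx => ?_
    push_cast
    rw [add_sub_cancel_right, add_sub_cancel_right, Complex.cpow_natCast,
      Complex.cpow_natCast]
  have h2 := Complex.betaIntegral_eval_nat_add_one_right
    (u := (a : ℂ) + 1) (by simp; positivity) b
  rw [h1] at h2
  have h3 : (∏ j ∈ Finset.range (b + 1), ((a : ℂ) + 1 + j))
      = (Nat.factorial (a + b + 1) : ℂ) / (Nat.factorial a : ℂ) := by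
    have := fact_prod_range a (b + 1)
    have hcast : ((Nat.factorial a * ∏ j ∈ Finset.range (b+1), (a + 1 + j) : ℕ) : ℂ)
        = ((Nat.factorial (a + (b+1)) : ℕ) : ℂ) := by rw [this]
    push_cast at hcast
    have ha : (Nat.factorial a : ℂ) ≠ 0 := by exact_mod_cast Nat.factorial_ne_zero a
    rw [show a + b + 1 = a + (b + 1) by ring]
    field_simp
    rw [← hcast]; ring
  rw [h3] at h2
  have ha : (Nat.factorial a : ℂ) ≠ 0 := by exact_mod_cast Nat.factorial_ne_zero a
  have hab : (Nat.factorial (a+b+1) : ℂ) ≠ 0 := by exact_mod_cast Nat.factorial_ne_zero _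
  have key : ((∫ x in (0:ℝ)..1, x ^ a * (1 - x) ^ b : ℝ) : ℂ)
      = ((Nat.factorial a : ℝ) * (Nat.factorial b) / (Nat.factorial (a + b + 1)) : ℝ) := by
    rw [h2]; push_cast; field_simp
  exact_mod_cast key

lemma beta_scaled (a b : ℕ) {r : ℝ} (hr : 0 ≤ r) :
    ∫ x in (0:ℝ)..r, x ^ a * (r - x) ^ b
      = (Nat.factorial a : ℝ) * (Nat.factorial b) / (Nat.factorial (a + b + 1))
        * r ^ (a + b + 1) := by
  rcases eq_or_lt_of_le hr with h | h
  · rw [← h]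
    simp [zero_pow (Nat.succ_ne_zero (a + b))]
  · have hr0 : r ≠ 0 := ne_of_gt h
    have heq := intervalIntegral.integral_comp_mul_left
      (f := fun x => x ^ a * (r - x) ^ b) (a := (0:ℝ)) (b := 1) (c := r) hr0
    simp only [mul_zero, mul_one, smul_eq_mul] at heq
    have h2 : ∫ x in (0:ℝ)..r, x ^ a * (r - x) ^ b
        = r * ∫ x in (0:ℝ)..1, (r * x) ^ a * (r - r * x) ^ b := by
      rw [heq]; field_simp
    rw [h2]
    have h3 : ∀ y : ℝ, (r * y) ^ a * (r - r * y) ^ b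
        = r ^ (a + b) * (y ^ a * (1 - y) ^ b) := by
      intro y
      rw [show r - r * y = r * (1 - y) by ring, mul_pow, mul_pow, pow_add]; ring
    simp only [h3]
    rw [intervalIntegral.integral_const_mul, beta_nat, pow_succ]
    ring


def simplexSet (n : ℕ) (r : ℝ) : Set (Fin n → ℝ) :=
  {x | (∀ i, 0 ≤ x i) ∧ ∑ i, x i ≤ r}

lemma isClosed_simplexSet (n : ℕ) (r : ℝ) : IsClosed (simplexSet n r) := by
  have h1 : IsClosed {x : Fin n → ℝ | ∀ i, 0 ≤ x i} := by
    have : {x : Fin n → ℝ | ∀ i, 0 ≤ x i} = ⋂ i, {x | 0 ≤ x i} := by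
      ext x; simp
    rw [this]
    exact isClosed_iInter fun i =>
      isClosed_le continuous_const (continuous_apply i)
  have h2 : IsClosed {x : Fin n → ℝ | ∑ i, x i ≤ r} :=
    isClosed_le (by continuity) continuous_const
  exact h1.inter h2

lemma simplexSet_subset_Icc (n : ℕ) (r : ℝ) :
    simplexSet n r ⊆ Set.Icc (0 : Fin n → ℝ) (fun _ => r) := by
  rintro x ⟨h1, h2⟩
  refine ⟨fun i => h1 i, fun i => ?_⟩
  calc x i ≤ ∑ j, x j := Finset.single_le_sum (fun j _ => h1 j) (Finset.mem_univ i)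
    _ ≤ r := h2

lemma isCompact_simplexSet (n : ℕ) (r : ℝ) : IsCompact (simplexSet n r) :=
  (isCompact_Icc).of_isClosed_subset (isClosed_simplexSet n r)
    (simplexSet_subset_Icc n r)

lemma simplexSet_empty (n : ℕ) {r : ℝ} (hr : r < 0) : simplexSet n r = ∅ := by
  ext x
  simp only [simplexSet, Set.mem_setOf_eq, Set.mem_empty_iff_false, iff_false, not_and]
  intro h1 h2
  exact absurd (le_trans (Finset.sum_nonneg fun i _ => h1 i) h2) (not_le.2 hr)

lemma dirichlet (n : ℕ) : ∀ (α : Fin n → ℕ) (r : ℝ), 0 ≤ r →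
    ∫ x in simplexSet n r, ∏ i, x i ^ α i
      = (∏ i, (Nat.factorial (α i) : ℝ)) * r ^ (n + ∑ i, α i)
          / (Nat.factorial (n + ∑ i, α i)) := by
  induction n with
  | zero =>
    intro α r hr
    have hset : simplexSet 0 r = Set.univ := by
      ext x; simp [simplexSet, hr]
    rw [hset]
    simp only [Finset.univ_eq_empty, Finset.prod_empty, Finset.sum_empty]
    rw [setIntegral_const]
    have : (volume : Measure (Fin 0 → ℝ)) Set.univ = 1 := by
      rw [MeasureTheory.volume_pi, Measure.pi_univ]
      simp
    simp [Measure.real, this]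
  | succ n ih =>
    intro α r hr
    set s := ∑ j, α (Fin.succ j) with hs
    set C := ∏ j, (Nat.factorial (α (Fin.succ j)) : ℝ) with hC
    have hF : Continuous (fun x : Fin (n+1) → ℝ => ∏ i, x i ^ α i) := by
      continuity
    have hmeas : MeasurableSet (simplexSet (n+1) r) :=
      (isClosed_simplexSet _ _).measurableSet
    have hint : IntegrableOn (fun x : Fin (n+1) → ℝ => ∏ i, x i ^ α i)
        (simplexSet (n+1) r) volume :=
      hF.continuousOn.integrableOn_compact (isCompact_simplexSet _ _)
    set F : (Fin (n+1) → ℝ) → ℝ :=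
      (simplexSet (n+1) r).indicator (fun x => ∏ i, x i ^ α i) with hFdef
    have hIndInt : Integrable F volume := (integrable_indicator_iff hmeas).2 hint
    have step1 : ∫ x in simplexSet (n+1) r, ∏ i, x i ^ α i = ∫ x, F x :=
      (MeasureTheory.integral_indicator hmeas).symm
    set e := MeasurableEquiv.piFinSuccAbove (fun _ : Fin (n+1) => ℝ) 0 with he
    have mp := volume_preserving_piFinSuccAbove (fun _ : Fin (n+1) => ℝ) 0
    have mps : MeasurePreserving e.symm volume volume := MeasurePreserving.symm e mp
    have step2 : ∫ x, F x = ∫ y : ℝ × (Fin n → ℝ), F (e.symm y) :=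
      (mps.integral_comp' (f := e.symm) F).symm
    have hInt2 : Integrable (fun y : ℝ × (Fin n → ℝ) => F (e.symm y)) volume :=
      (mps.integrable_comp_emb e.symm.measurableEmbedding).2 hIndInt
    have step3 : ∫ y : ℝ × (Fin n → ℝ), F (e.symm y)
        = ∫ a : ℝ, ∫ b : Fin n → ℝ, F (e.symm (a, b)) := by
      rw [show (volume : Measure (ℝ × (Fin n → ℝ))) = volume.prod volume from rfl] at hInt2 ⊢
      exact integral_prod _ hInt2
    have hsymm : ∀ (a : ℝ) (b : Fin n → ℝ), e.symm (a, b) = Fin.cons a b := by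
      intro a b
      rw [he, MeasurableEquiv.piFinSuccAbove_symm_apply]
      exact Fin.insertNth_zero' a b
    have key : ∀ (a : ℝ) (b : Fin n → ℝ),
        F (Fin.cons a b) = Set.indicator {a : ℝ | 0 ≤ a} (fun a => a ^ α 0) a *
          (simplexSet n (r - a)).indicator (fun b => ∏ j, b j ^ α (Fin.succ j)) b := by
      intro a b
      have hmem : Fin.cons a b ∈ simplexSet (n+1) r ↔
          (0 ≤ a ∧ b ∈ simplexSet n (r - a)) := by
        simp only [simplexSet, Set.mem_setOf_eq, Fin.forall_fin_succ, Fin.cons_zero,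
          Fin.cons_succ, Fin.sum_univ_succ, ← le_sub_iff_add_le']
        tauto
      have hprod : (∏ i, (Fin.cons a b) i ^ α i)
          = a ^ α 0 * ∏ j, b j ^ α (Fin.succ j) := by
        rw [Fin.prod_univ_succ]
        simp [Fin.cons_zero, Fin.cons_succ]
      rw [hFdef]
      simp only [Set.indicator_apply, Set.mem_setOf_eq]
      by_cases h1 : 0 ≤ a
      · by_cases h2 : b ∈ simplexSet n (r - a)
        · rw [Set.indicator_of_mem (hmem.2 ⟨h1, h2⟩), Set.indicator_of_mem h2,
            if_pos h1, hprod]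
        · rw [Set.indicator_of_notMem (fun hc => h2 (hmem.1 hc).2),
            Set.indicator_of_notMem h2, mul_zero]
      · rw [Set.indicator_of_notMem (fun hc => h1 (hmem.1 hc).1), if_neg h1,
          zero_mul]
    set m := n + s with hm
    have hinner : ∀ a : ℝ, (∫ b : Fin n → ℝ, F (Fin.cons a b))
        = Set.indicator (Set.Icc (0:ℝ) r)
            (fun a => a ^ α 0 * (C * (r - a) ^ m / (Nat.factorial m))) a := by
      intro a
      simp only [key]
      rw [MeasureTheory.integral_const_mul]
      have hmeasn : MeasurableSet (simplexSet n (r - a)) :=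
        (isClosed_simplexSet _ _).measurableSet
      rw [MeasureTheory.integral_indicator hmeasn]
      simp only [Set.indicator_apply, Set.mem_setOf_eq, Set.mem_Icc]
      by_cases h1 : 0 ≤ a
      · by_cases h2 : a ≤ r
        · rw [if_pos h1, if_pos ⟨h1, h2⟩,
            ih (fun j => α (Fin.succ j)) (r - a) (by linarith)]
        · rw [if_neg (fun hc : 0 ≤ a ∧ a ≤ r => h2 hc.2),
            simplexSet_empty n (by linarith : r - a < 0)]
          simp
      · rw [if_neg h1, if_neg (fun hc : 0 ≤ a ∧ a ≤ r => h1 hc.1), zero_mul]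
    have houter : ∫ a : ℝ, ∫ b : Fin n → ℝ, F (e.symm (a, b))
        = ∫ a in (0:ℝ)..r, a ^ α 0 * (C * (r - a) ^ m / (Nat.factorial m)) := by
      simp only [hsymm, hinner]
      rw [MeasureTheory.integral_indicator measurableSet_Icc, integral_Icc_eq_integral_Ioc,
        ← intervalIntegral.integral_of_le hr]
    have hbeta : ∫ a in (0:ℝ)..r, a ^ α 0 * (C * (r - a) ^ m / (Nat.factorial m))
        = (C / (Nat.factorial m)) *
          ((Nat.factorial (α 0) : ℝ) * (Nat.factorial m) / (Nat.factorial (α 0 + m + 1))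
            * r ^ (α 0 + m + 1)) := by
      have : ∀ a : ℝ, a ^ α 0 * (C * (r - a) ^ m / (Nat.factorial m))
          = (C / (Nat.factorial m)) * (a ^ α 0 * (r - a) ^ m) := by
        intro a; ring
      simp only [this]
      rw [intervalIntegral.integral_const_mul, beta_scaled _ _ hr]
    rw [step1, step2, step3, houter, hbeta]
    have hsum : ∑ i, α i = α 0 + s := by
      rw [Fin.sum_univ_succ]
    have hprodf : (∏ i, (Nat.factorial (α i) : ℝ)) = (Nat.factorial (α 0) : ℝ) * C := by
      rw [Fin.prod_univ_succ]
    have hexp : α 0 + m + 1 = n + 1 + ∑ i, α i := by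
      rw [hsum, hm]; ring
    rw [hexp, hprodf]
    have hm0 : (Nat.factorial m : ℝ) ≠ 0 := by exact_mod_cast Nat.factorial_ne_zero m
    have hx0 : (Nat.factorial (n + 1 + ∑ i, α i) : ℝ) ≠ 0 := by
      exact_mod_cast Nat.factorial_ne_zero _
    field_simp


lemma integrableOn_eval {n : ℕ} (p : MvPolynomial (Fin n) ℝ) (r : ℝ) :
    IntegrableOn (fun x : Fin n → ℝ => MvPolynomial.eval x p) (simplexSet n r) volume :=
  (MvPolynomial.continuous_eval p).continuousOn.integrableOn_compact (isCompact_simplexSet n r)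

lemma integrableOn_monomial {n : ℕ} (α : Fin n →₀ ℕ) (c r : ℝ) :
    IntegrableOn (fun x : Fin n → ℝ => c * ∏ i, x i ^ α i) (simplexSet n r) volume := by
  have : Continuous (fun x : Fin n → ℝ => c * ∏ i, x i ^ α i) := by continuity
  exact this.continuousOn.integrableOn_compact (isCompact_simplexSet n r)

lemma integral_eval_homogeneous {n : ℕ} (j : ℕ) (p : MvPolynomial (Fin n) ℝ)
    (hp : p.IsHomogeneous j) :
    ∫ x in simplexSet n 1, MvPolynomial.eval x p
      = (∑ α ∈ p.support, (∏ i, (Nat.factorial (α i) : ℝ)) * p.coeff α)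
          / (Nat.factorial (n + j)) := by
  simp only [MvPolynomial.eval_eq']
  rw [integral_finset_sum _ (fun α _ => integrableOn_monomial α _ 1)]
  rw [Finset.sum_div]
  refine Finset.sum_congr rfl fun α hα => ?_
  rw [MeasureTheory.integral_const_mul, dirichlet n (fun i => α i) 1 zero_le_one, one_pow, mul_one]
  have hdeg : ∑ i, α i = j := by
    have := hp (MvPolynomial.mem_support_iff.1 hα)
    rw [← this]
    rw [Finsupp.weight_apply]
    simp [Finsupp.sum_fintype]
  rw [hdeg]
  ring

theorem integral_poly_canonical_simplex (n t : ℕ) (f : MvPolynomial (Fin n) ℝ)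
    (g : ℕ → MvPolynomial (Fin n) ℝ) (hg : ∀ j, (g j).IsHomogeneous j)
    (hf : f = ∑ j ∈ Finset.range (t + 1), g j) :
    ∫ x in {x : Fin n → ℝ | (∀ i, 0 ≤ x i) ∧ ∑ i, x i ≤ 1}, MvPolynomial.eval x f =
      (1 / (Nat.factorial n : ℝ)) *
        (MvPolynomial.coeff 0 (g 0) +
          ∑ j ∈ Finset.Icc 1 t,
            bombieriEval (g j)
              (fun _ => ((∏ k ∈ Finset.range j, (n + 1 + k : ℝ)) ^ ((1 : ℝ) / j))⁻¹)) := by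
  have hset : {x : Fin n → ℝ | (∀ i, 0 ≤ x i) ∧ ∑ i, x i ≤ 1} = simplexSet n 1 := rfl
  rw [hset, hf]
  have heval : ∀ x : Fin n → ℝ, MvPolynomial.eval x (∑ j ∈ Finset.range (t+1), g j)
      = ∑ j ∈ Finset.range (t+1), MvPolynomial.eval x (g j) := fun x => map_sum _ _ _
  simp only [heval]
  rw [integral_finset_sum _ (fun j _ => integrableOn_eval (g j) 1)]
  have hterm : ∀ j, ∫ x in simplexSet n 1, MvPolynomial.eval x (g j)
      = (∑ α ∈ (g j).support, (∏ i, (Nat.factorial (α i) : ℝ)) * (g j).coeff α)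
          / (Nat.factorial (n + j)) := fun j => integral_eval_homogeneous j (g j) (hg j)
  simp only [hterm]
  have hsplit : Finset.range (t+1) = insert 0 (Finset.Icc 1 t) := by
    ext k; simp only [Finset.mem_range, Finset.mem_insert, Finset.mem_Icc]; omega
  rw [hsplit, Finset.sum_insert (by simp)]
  have h0 : (∑ α ∈ (g 0).support, (∏ i, (Nat.factorial (α i) : ℝ)) * (g 0).coeff α)
      = MvPolynomial.coeff 0 (g 0) := by
    have hsub : (g 0).support ⊆ {0} := by
      intro α hα
      have hd := (hg 0) (MvPolynomial.mem_support_iff.1 hα)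
      simp only [Finset.mem_singleton]
      ext i
      have : (Finsupp.weight 1) α = ∑ i, α i := by
        rw [Finsupp.weight_apply]; simp [Finsupp.sum_fintype]
      rw [this] at hd
      have := Finset.sum_eq_zero_iff.1 hd i (Finset.mem_univ i)
      simpa using this
    rw [Finset.sum_subset hsub]
    · simp [MvPolynomial.coeff]
    · intro α _ hα
      rw [MvPolynomial.notMem_support_iff.1 hα, mul_zero]
  rw [h0, mul_add, Finset.mul_sum]
  congr 1
  · simp only [Nat.add_zero, one_div]
    rw [div_eq_mul_inv, mul_comm]
  · refine Finset.sum_congr rfl fun j hj => ?_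
    have hj1 : 1 ≤ j := (Finset.mem_Icc.1 hj).1
    set P := ∏ k ∈ Finset.range j, (n + 1 + k : ℝ) with hPdef
    have hP : 0 < P := Finset.prod_pos fun k _ => by positivity
    set c := (P ^ ((1 : ℝ) / j))⁻¹ with hcdef
    have hcj : c ^ j = P⁻¹ := by
      rw [hcdef, inv_pow, ← Real.rpow_natCast (P ^ ((1:ℝ)/j)) j, ← Real.rpow_mul hP.le,
        one_div, inv_mul_cancel₀ (by exact_mod_cast Nat.one_le_iff_ne_zero.1 hj1 : (j:ℝ) ≠ 0),
        Real.rpow_one]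
    have hbomb : bombieriEval (g j) (fun _ => c)
        = (∑ α ∈ (g j).support, (∏ i, (Nat.factorial (α i) : ℝ)) * (g j).coeff α) * P⁻¹ := by
      rw [bombieriEval, Finset.sum_mul]
      refine Finset.sum_congr rfl fun α hα => ?_
      have hdeg : ∑ i, α i = j := by
        have hd := (hg j) (MvPolynomial.mem_support_iff.1 hα)
        rw [← hd, Finsupp.weight_apply]
        simp [Finsupp.sum_fintype]
      rw [Finset.prod_pow_eq_pow_sum, hdeg, hcj]
    rw [hbomb]
    have hfact : ((Nat.factorial (n + j) : ℝ)) = (Nat.factorial n : ℝ) * P := by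
      have := fact_prod_range n j
      have hcast : ((Nat.factorial n * ∏ k ∈ Finset.range j, (n + 1 + k) : ℕ) : ℝ)
          = ((Nat.factorial (n + j) : ℕ) : ℝ) := by rw [this]
      push_cast at hcast
      rw [← hcast, hPdef]
    rw [hfact]
    have hn0 : (Nat.factorial n : ℝ) ≠ 0 := by exact_mod_cast Nat.factorial_ne_zero n
    field_simp
end
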